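/- If H is a convex subgraph of a graph G and X is a mutual-visibility set of G, then X ∩ V(H) is a mutual-visibility set of H. -/

import Mathlib

open SimpleGraph

/-- Two vertices are `X`-visible in `G`: some shortest path between them has
no internal vertex in `X`. -/
def IsVisiblePair {V : Type*} (G : SimpleGraph V) (X : Set V) (x y : V) : Prop :=
  ∃ p : G.Walk x y, p.IsPath ∧ p.length = G.dist x y ∧
    ∀ z ∈ p.support, z ∈ X → z = x ∨ z = y

/-- `X` is a mutual-visibility set of `G`. -/
def MutualVisSet {V : Type*} (G : SimpleGraph V) (X : Set V) : Prop :=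
  ∀ x ∈ X, ∀ y ∈ X, IsVisiblePair G X x y

/-- `X` is a total mutual-visibility set of `G`. -/
def TotalMutualVisSet {V : Type*} (G : SimpleGraph V) (X : Set V) : Prop :=
  ∀ x y : V, IsVisiblePair G X x y

/-- The mutual-visibility number `μ(G)`. -/
noncomputable def mutualVisNum {V : Type*} (G : SimpleGraph V) : ℕ :=
  sSup {n | ∃ X : Set V, MutualVisSet G X ∧ X.ncard = n}

/-- The total mutual-visibility number `μₜ(G)`. -/
noncomputable def totalMutualVisNum {V : Type*} (G : SimpleGraph V) : ℕ :=
  sSup {n | ∃ X : Set V, TotalMutualVisSet G X ∧ X.ncard = n}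

/-- A set of vertices is convex: every shortest path in `G` between two of its
vertices has all its vertices in the set. -/
def ConvexSet {V : Type*} (G : SimpleGraph V) (S : Set V) : Prop :=
  ∀ x ∈ S, ∀ y ∈ S, ∀ p : G.Walk x y, p.IsPath → p.length = G.dist x y →
    ∀ z ∈ p.support, z ∈ S


lemma lift_walk {V : Type*} {G : SimpleGraph V} {S : Set V} :
    ∀ {x y : V} (p : G.Walk x y) (hx : x ∈ S) (hy : y ∈ S),
      (∀ z ∈ p.support, z ∈ S) →
      ∃ q : (G.induce S).Walk ⟨x, hx⟩ ⟨y, hy⟩,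
        q.map (Embedding.induce S).toHom = p := by
  intro x y p
  induction p with
  | nil =>
    intro hx hy _
    exact ⟨Walk.nil, rfl⟩
  | @cons a b c hab p ih =>
    intro ha hc hsup
    have hb : b ∈ S := hsup b (by simp)
    obtain ⟨q, hq⟩ := ih hb hc (fun z hz => hsup z (by simp [hz]))
    refine ⟨Walk.cons (by exact hab : (G.induce S).Adj ⟨a, ha⟩ ⟨b, hb⟩) q, ?_⟩
    subst hq; rfl

/-- If `H` (given by its vertex set `S`) is a convex subgraph of `G` and `X` is
a mutual-visibility set of `G`, then `X ∩ V(H)` is a mutual-visibility set of `H`. -/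
theorem convex_inter_mutualVisSet {V : Type*} (G : SimpleGraph V) (hG : G.Connected)
    (S : Set V) (hS : ConvexSet G S) (X : Set V) (hX : MutualVisSet G X) :
    MutualVisSet (SimpleGraph.induce S G) (Subtype.val ⁻¹' X) := by
  intro a ha b hb
  obtain ⟨p, hp, hlen, hvis⟩ := hX a.val ha b.val hb
  have hsub : ∀ z ∈ p.support, z ∈ S := hS a.val a.2 b.val b.2 p hp hlen
  obtain ⟨q, hq⟩ := lift_walk p a.2 b.2 hsub
  have hqlen : q.length = p.length := by
    rw [← hq]; exact (Walk.length_map _ _).symm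
  have hqpath : q.IsPath := by
    apply Walk.IsPath.of_map (f := (Embedding.induce S).toHom)
    rw [hq]; exact hp
  have hdle : ∀ {u v : V} (hu : u ∈ S) (hv : v ∈ S)
      (r : (G.induce S).Walk ⟨u, hu⟩ ⟨v, hv⟩), G.dist u v ≤ r.length := by
    intro u v hu hv r
    have := SimpleGraph.dist_le (r.map (Embedding.induce S).toHom)
    rwa [Walk.length_map] at this
  have hdist : q.length = (SimpleGraph.induce S G).dist a b := by
    apply le_antisymm
    · obtain ⟨r, hr⟩ := (Walk.reachable q).exists_walk_length_eq_dist
      rw [← hr]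
      calc q.length = G.dist a.val b.val := by rw [hqlen, hlen]
        _ ≤ r.length := hdle a.2 b.2 r
    · exact SimpleGraph.dist_le q
  refine ⟨q, hqpath, hdist, ?_⟩
  intro z hz hzX
  have hz' : z.val ∈ p.support := by
    have h2 := Walk.support_map (Embedding.induce S).toHom q
    rw [hq] at h2
    exact h2 ▸ List.mem_map.2 ⟨z, hz, rfl⟩
  rcases hvis z.val hz' hzX with h | h
  · exact Or.inl (Subtype.ext h)
  · exact Or.inr (Subtype.ext h)
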